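/- Let a be a real number with a > 1. Then for every real x with |x| < π/(2a), ∫₀^∞ exp(−y^a · e^{iax}) dy = Γ(1 + 1/a) · e^{−ix}, where Γ is the real Gamma function. -/

import Mathlib

open MeasureTheory
open Set Complex Filter Metric


lemma aux_integrable {s b : ℝ} (hs : 0 < s) (hb : 0 < b) :
    IntegrableOn (fun t : ℝ => t ^ (s - 1) * Real.exp (-b * t)) (Ioi 0) := by
  have := integrableOn_rpow_mul_exp_neg_mul_rpow (p := 1) (s := s - 1) (b := b)
    (by linarith) one_pos hb
  simpa using this

lemma aux_norm {s : ℝ} {z : ℂ} {t : ℝ} (ht : 0 < t) :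
    ‖(t : ℂ) ^ ((s : ℂ) - 1) * Complex.exp (-z * t)‖
      = t ^ (s - 1) * Real.exp (-z.re * t) := by
  rw [norm_mul,
    Complex.norm_cpow_eq_rpow_re_of_pos ht, Complex.norm_exp]
  have h1 : ((s:ℂ)-1).re = s - 1 := by simp
  have h2 : (-z * (t:ℂ)).re = -z.re * t := by simp
  rw [h1, h2]

lemma aux_meas {s : ℝ} (z : ℂ) :
    AEStronglyMeasurable (fun t : ℝ => (t : ℂ) ^ ((s : ℂ) - 1) * Complex.exp (-z * t))
      (volume.restrict (Ioi 0)) := by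
  apply ContinuousOn.aestronglyMeasurable _ measurableSet_Ioi
  intro t ht
  refine ContinuousWithinAt.mul ?_ ?_
  · apply ContinuousAt.continuousWithinAt
    apply ContinuousAt.cpow (Complex.continuous_ofReal.continuousAt) continuousAt_const
    exact Or.inl (by simpa using ht)
  · exact ((Complex.continuous_exp.comp (continuous_const.mul Complex.continuous_ofReal)).continuousWithinAt)

lemma aux_integrableF {s : ℝ} (hs : 0 < s) {z : ℂ} (hz : 0 < z.re) :
    IntegrableOn (fun t : ℝ => (t : ℂ) ^ ((s : ℂ) - 1) * Complex.exp (-z * t)) (Ioi 0) := by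
  refine Integrable.mono' (aux_integrable hs hz) (aux_meas z) ?_
  filter_upwards [ae_restrict_mem measurableSet_Ioi] with t ht
  rw [aux_norm ht]

lemma aux_hasDerivAt {s : ℝ} (hs : 0 < s) {w₀ : ℂ} (hw₀ : 0 < w₀.re) :
    DifferentiableAt ℂ
      (fun w : ℂ => ∫ t in Ioi (0:ℝ), (t : ℂ) ^ ((s : ℂ) - 1) * Complex.exp (-w * t)) w₀ := by
  set δ := w₀.re with hδ
  have hδ2 : 0 < δ / 2 := by positivity
  have key := hasDerivAt_integral_of_dominated_loc_of_deriv_le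
    (F := fun (w : ℂ) (t : ℝ) => (t : ℂ) ^ ((s : ℂ) - 1) * Complex.exp (-w * t))
    (F' := fun (w : ℂ) (t : ℝ) => (t : ℂ) ^ ((s : ℂ) - 1) * (Complex.exp (-w * t) * (-t)))
    (μ := volume.restrict (Ioi (0:ℝ))) (x₀ := w₀)
    (bound := fun t : ℝ => t ^ s * Real.exp (-(δ/2) * t))
    (Metric.ball_mem_nhds w₀ hδ2)
    (Eventually.of_forall fun w => aux_meas w) (aux_integrableF hs hw₀)
    ?_ ?_ ?_ ?_
  · exact key.2.differentiableAt
  · -- measurability of F' w₀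
    have heq : (fun t : ℝ => (t : ℂ) ^ ((s : ℂ) - 1) * (Complex.exp (-w₀ * t) * (-t)))
        = fun t : ℝ => ((t : ℂ) ^ ((s : ℂ) - 1) * Complex.exp (-w₀ * t)) * (-(t:ℂ)) := by
      funext t; ring
    show AEStronglyMeasurable (fun t : ℝ => (t : ℂ) ^ ((s : ℂ) - 1)
      * (Complex.exp (-w₀ * t) * (-t))) (volume.restrict (Ioi 0))
    rw [heq]
    exact (aux_meas w₀).mul
      ((Complex.continuous_ofReal.neg.aestronglyMeasurable).restrict)
  · -- bound
    filter_upwards [ae_restrict_mem measurableSet_Ioi] with t ht w hw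
    have ht' : (0:ℝ) < t := ht
    have hwre : δ / 2 < w.re := by
      have h1 : |(w - w₀).re| ≤ ‖w - w₀‖ := Complex.abs_re_le_norm _
      have h2 : ‖w - w₀‖ < δ / 2 := by rwa [Metric.mem_ball, Complex.dist_eq] at hw
      have := abs_lt.mp (lt_of_le_of_lt h1 h2)
      simp only [Complex.sub_re] at this
      linarith [this.1]
    have hnorm : ‖(t : ℂ) ^ ((s : ℂ) - 1) * (Complex.exp (-w * t) * (-t))‖
        = t ^ (s - 1) * Real.exp (-w.re * t) * t := by
      rw [show (t : ℂ) ^ ((s : ℂ) - 1) * (Complex.exp (-w * t) * (-t))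
          = ((t : ℂ) ^ ((s : ℂ) - 1) * Complex.exp (-w * t)) * (-(t:ℂ)) by ring,
        norm_mul, aux_norm ht]
      simp [abs_of_pos ht', ht'.le]
    rw [hnorm, Real.rpow_sub_one ht.ne']
    have hexp : Real.exp (-w.re * t) ≤ Real.exp (-(δ/2) * t) := by
      apply Real.exp_le_exp.mpr
      nlinarith [mul_pos (sub_pos.mpr hwre) ht']
    calc t ^ s / t * Real.exp (-w.re * t) * t = t ^ s * Real.exp (-w.re * t) := by
          field_simp [ht'.ne']
      _ ≤ t ^ s * Real.exp (-(δ/2) * t) := by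
          exact mul_le_mul_of_nonneg_left hexp (Real.rpow_nonneg ht.le _)
  · -- bound integrable
    have := integrableOn_rpow_mul_exp_neg_mul_rpow (p := 1) (s := s) (b := δ/2)
      (by linarith) one_pos hδ2
    simpa [IntegrableOn] using this
  · -- derivative
    filter_upwards [ae_restrict_mem measurableSet_Ioi] with t ht w hw
    have h1 : HasDerivAt (fun w : ℂ => -w * t) (-1 * t) w := by
      simpa using ((hasDerivAt_id w).neg.mul_const (t : ℂ))
    have h2 := (h1.cexp).const_mul ((t : ℂ) ^ ((s : ℂ) - 1))
    convert h2 using 1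
    · rfl
    ring

lemma gamma_integral_complex {s : ℝ} (hs : 0 < s) {z : ℂ} (hz : 0 < z.re) :
    ∫ t in Ioi (0:ℝ), (t : ℂ) ^ ((s : ℂ) - 1) * Complex.exp (-z * t)
      = (Real.Gamma s : ℂ) * z ^ (-(s : ℂ)) := by
  set U : Set ℂ := {w : ℂ | 0 < w.re} with hUdef
  have hUopen : IsOpen U := isOpen_lt continuous_const Complex.continuous_re
  set F : ℂ → ℂ := fun w => ∫ t in Ioi (0:ℝ), (t : ℂ) ^ ((s : ℂ) - 1) * Complex.exp (-w * t)
    with hF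
  set G : ℂ → ℂ := fun w => (Real.Gamma s : ℂ) * w ^ (-(s : ℂ)) with hG
  have hFan : AnalyticOnNhd ℂ F U := by
    apply DifferentiableOn.analyticOnNhd _ hUopen
    intro w hw
    exact (aux_hasDerivAt hs hw).differentiableWithinAt
  have hGan : AnalyticOnNhd ℂ G U := by
    apply DifferentiableOn.analyticOnNhd _ hUopen
    intro w hw
    refine ((differentiableAt_const _).mul ?_).differentiableWithinAt
    exact (differentiableAt_id.cpow (differentiableAt_const _) (Or.inl hw))
  have hreal : ∀ r : ℝ, 0 < r → F r = G r := by
    intro r hr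
    have h1 := Complex.integral_cpow_mul_exp_neg_mul_Ioi
      (a := (s : ℂ)) (r := r) (by simpa using hs) hr
    have h2 : F r = ∫ t in Ioi (0:ℝ), (t : ℂ) ^ ((s : ℂ) - 1) * Complex.exp (-(r * t)) := by
      simp only [hF, neg_mul]
    rw [h2, h1, hG]
    rw [Complex.Gamma_ofReal]
    rw [mul_comm]
    congr 1
    rw [one_div, Complex.inv_cpow _ _ (by
        rw [Complex.arg_ofReal_of_nonneg hr.le]; exact Real.pi_ne_zero.symm),
      ← Complex.cpow_neg]
  have h1U : (1 : ℂ) ∈ U := by simp [hUdef]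
  have hfreq : ∃ᶠ w in nhdsWithin (1 : ℂ) {(1:ℂ)}ᶜ, F w = G w := by
    have htend : Tendsto (fun r : ℝ => (r : ℂ)) (nhdsWithin 1 (Ioi 1))
        (nhdsWithin (1 : ℂ) {(1:ℂ)}ᶜ) := by
      apply tendsto_nhdsWithin_of_tendsto_nhds_of_eventually_within
      · exact (Complex.continuous_ofReal.tendsto 1).mono_left nhdsWithin_le_nhds
      · filter_upwards [self_mem_nhdsWithin] with r hr
        simp only [mem_compl_iff, mem_singleton_iff]
        intro h
        have hr1 : r = 1 := by exact_mod_cast h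
        rw [mem_Ioi, hr1] at hr
        exact lt_irrefl _ hr
    apply htend.frequently
    apply Eventually.frequently
    filter_upwards [self_mem_nhdsWithin] with r hr
    exact hreal r (lt_trans one_pos hr)
  have := hFan.eqOn_of_preconnected_of_frequently_eq hGan
    ((convex_halfSpace_re_gt 0).isPreconnected) h1U hfreq
  exact this hz

/-- **Evaluation of the integral `∫₀^∞ exp(-yᵃ e^{iax}) dy`.**
For real `a > 1` and every real `x` with `|x| < π/(2a)`,
`∫₀^∞ exp(-yᵃ e^{iax}) dy = Γ(1 + 1/a) e^{-ix}`, where `yᵃ` is the real power,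
the exponentials are complex, and `Γ` is the real Gamma function. -/
theorem integral_exp_neg_rpow_mul_exp (a : ℝ) (ha : 1 < a) (x : ℝ)
    (hx : |x| < Real.pi / (2 * a)) :
    ∫ y in Set.Ioi (0 : ℝ), Complex.exp (-(y ^ a : ℝ) * Complex.exp (Complex.I * a * x))
      = (Real.Gamma (1 + 1 / a) : ℂ) * Complex.exp (-Complex.I * x) := by
  have ha0 : 0 < a := lt_trans one_pos ha
  set z : ℂ := Complex.exp (Complex.I * a * x) with hzdef
  have hax : |a * x| < Real.pi / 2 := by
    rw [abs_mul, abs_of_pos ha0]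
    calc a * |x| < a * (Real.pi / (2 * a)) := mul_lt_mul_of_pos_left hx ha0
      _ = Real.pi / 2 := by field_simp
  have haxlt := abs_lt.mp hax
  have him : (Complex.I * a * x).im = a * x := by simp
  have hre : (Complex.I * a * x).re = 0 := by simp
  have hzre : 0 < z.re := by
    rw [hzdef, Complex.exp_re, him, hre]
    have hcos : 0 < Real.cos (a * x) := Real.cos_pos_of_mem_Ioo ⟨haxlt.1, haxlt.2⟩
    positivity
  have hs : 0 < 1 / a := by positivity
  have key := gamma_integral_complex (s := 1 / a) hs hzre
  have hm := mellin_comp_rpow (E := ℂ) (fun t : ℝ => Complex.exp (-(t : ℂ) * z)) 1 a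
  have hL : mellin (fun t : ℝ => Complex.exp (-((t ^ a : ℝ) : ℂ) * z)) 1
      = ∫ y in Ioi (0:ℝ), Complex.exp (-((y ^ a : ℝ) : ℂ) * z) := by
    simp only [mellin, sub_self, Complex.cpow_zero, one_smul]
  have hR : mellin (fun t : ℝ => Complex.exp (-(t : ℂ) * z)) ((1 : ℂ) / a)
      = (Real.Gamma (1 / a) : ℂ) * z ^ (-(((1 / a : ℝ)) : ℂ)) := by
    rw [← key]
    simp only [mellin, smul_eq_mul]
    rw [show ((1 : ℂ) / a) = (((1 / a : ℝ)) : ℂ) by push_cast; ring]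
    refine setIntegral_congr_fun measurableSet_Ioi fun t ht => ?_
    congr 1
    ring
  have hcombined : (∫ y in Ioi (0:ℝ), Complex.exp (-((y ^ a : ℝ) : ℂ) * z))
      = |a|⁻¹ • ((Real.Gamma (1 / a) : ℂ) * z ^ (-(((1 / a : ℝ)) : ℂ))) := by
    rw [← hL, ← hR]
    exact hm
  rw [hcombined]
  have hzpow : z ^ (-(((1 / a : ℝ)) : ℂ)) = Complex.exp (-Complex.I * x) := by
    rw [Complex.cpow_def_of_ne_zero (Complex.exp_ne_zero _)]
    rw [Complex.log_exp (by rw [him]; linarith [Real.two_le_pi, haxlt.1, Real.pi_pos]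
        : -Real.pi < (Complex.I * a * x).im)
      (by rw [him]; linarith [haxlt.2, Real.pi_pos] : (Complex.I * a * x).im ≤ Real.pi)]
    congr 1
    have haC : (a : ℂ) ≠ 0 := by exact_mod_cast ha0.ne'
    push_cast
    field_simp
  rw [hzpow, abs_of_pos ha0, real_smul]
  have hgamma : Real.Gamma (1 + 1 / a) = (1 / a) * Real.Gamma (1 / a) := by
    rw [add_comm, Real.Gamma_add_one hs.ne']
  rw [hgamma]
  push_cast
  ring
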